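/- Let n ≥ 1 be an integer, let p_max ∈ (0,1) and ε′ > 0 satisfy p_max + ε′ < 1, and set the acceptance threshold τ := ⌈n·(p_max + ε′)⌉. Let (Ω, 𝓕, μ) be a probability space with filtration 𝓕₀ ⊆ … ⊆ 𝓕ₙ and let I₁, …, Iₙ be {0,1}-valued random variables, each Iᵢ being 𝓕ᵢ-measurable, with E[Iᵢ ∣ 𝓕_{i-1}] ≤ p_max almost surely for all i. Let S = Σ_{i=1}^n Iᵢ. Then n·p_max < τ ≤ n and μ(S ≥ τ) ≤ exp(−n · D(τ/n ‖ p_max)). -/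

import Mathlib

open MeasureTheory Real Filter

/-- Binary relative entropy `D(u ‖ v)` (the `0 · ln 0 = 0` convention is automatic). -/
noncomputable def klBin (u v : ℝ) : ℝ :=
  u * Real.log (u / v) + (1 - u) * Real.log ((1 - u) / (1 - v))

section helpers

lemma integrable_of_abs_bound {Ω : Type*} {m0 : MeasurableSpace Ω} {μ : Measure Ω}
    [IsFiniteMeasure μ] {f : Ω → ℝ} (hf : AEStronglyMeasurable f μ) (C : ℝ)
    (h : ∀ ω, |f ω| ≤ C) : Integrable f μ :=
  Integrable.mono' (integrable_const C) hf (Filter.Eventually.of_forall h)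

lemma mgf_sum_le {Ω : Type*} {m0 : MeasurableSpace Ω} {μ : Measure Ω} [IsProbabilityMeasure μ]
    (𝓕 : Filtration ℕ m0) (I : ℕ → Ω → ℝ) (p : ℝ) (hp : 0 ≤ p) (n : ℕ)
    (hbin : ∀ i ∈ Finset.Icc 1 n, ∀ ω, I i ω = 0 ∨ I i ω = 1)
    (hmeas : ∀ i ∈ Finset.Icc 1 n, Measurable[𝓕 i] (I i))
    (hcond : ∀ i ∈ Finset.Icc 1 n, ∀ᵐ ω ∂μ, (μ[I i | 𝓕 (i - 1)]) ω ≤ p)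
    (t : ℝ) (ht : 0 ≤ t) :
    ∀ k, k ≤ n →
      ∫ ω, exp (t * ∑ i ∈ Finset.Icc 1 k, I i ω) ∂μ ≤ (1 + p * (exp t - 1)) ^ k := by
  have hI01 : ∀ i ∈ Finset.Icc 1 n, ∀ ω, 0 ≤ I i ω ∧ I i ω ≤ 1 := by
    intro i hi ω; rcases hbin i hi ω with h | h <;> rw [h] <;> norm_num
  intro k
  induction k with
  | zero => intro _; simp
  | succ k ih =>
    intro hk1
    have hk : k ≤ n := Nat.le_of_succ_le hk1
    have hmem : k + 1 ∈ Finset.Icc 1 n := Finset.mem_Icc.mpr ⟨Nat.succ_le_succ (Nat.zero_le _), hk1⟩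
    set g : Ω → ℝ := fun ω => exp (t * ∑ i ∈ Finset.Icc 1 k, I i ω) with hg_def
    -- measurability of g w.r.t. 𝓕 k
    have hS_meas : Measurable[𝓕 k] fun ω => ∑ i ∈ Finset.Icc 1 k, I i ω := by
      apply Finset.measurable_sum
      intro i hi
      have hin : i ∈ Finset.Icc 1 n :=
        Finset.mem_Icc.mpr ⟨(Finset.mem_Icc.mp hi).1, le_trans (Finset.mem_Icc.mp hi).2 hk⟩
      exact (hmeas i hin).mono (𝓕.mono (Finset.mem_Icc.mp hi).2) le_rfl
    have hg_sm : StronglyMeasurable[𝓕 k] g :=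
      ((measurable_const.mul hS_meas).exp).stronglyMeasurable
    have hm : 𝓕 k ≤ m0 := 𝓕.le k
    have hg_meas : AEStronglyMeasurable g μ :=
      (hg_sm.mono hm).aestronglyMeasurable
    -- bounds on g
    have hS_bound : ∀ ω, 0 ≤ (∑ i ∈ Finset.Icc 1 k, I i ω) ∧
        (∑ i ∈ Finset.Icc 1 k, I i ω) ≤ k := by
      intro ω
      constructor
      · exact Finset.sum_nonneg fun i hi => (hI01 i (Finset.mem_Icc.mpr
          ⟨(Finset.mem_Icc.mp hi).1, le_trans (Finset.mem_Icc.mp hi).2 hk⟩) ω).1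
      · calc (∑ i ∈ Finset.Icc 1 k, I i ω) ≤ ∑ i ∈ Finset.Icc 1 k, (1 : ℝ) := by
              refine Finset.sum_le_sum fun i hi => (hI01 i (Finset.mem_Icc.mpr
                ⟨(Finset.mem_Icc.mp hi).1, le_trans (Finset.mem_Icc.mp hi).2 hk⟩) ω).2
            _ = k := by simp
    have hg_nonneg : ∀ ω, 0 ≤ g ω := fun ω => (exp_pos _).le
    have hg_bound : ∀ ω, |g ω| ≤ exp (t * k) := by
      intro ω
      rw [abs_of_nonneg (hg_nonneg ω)]
      exact exp_le_exp.mpr (mul_le_mul_of_nonneg_left (hS_bound ω).2 ht)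
    have hg_int : Integrable g μ := integrable_of_abs_bound hg_meas _ hg_bound
    -- I (k+1) facts
    have hI_meas : AEStronglyMeasurable (I (k+1)) μ :=
      ((hmeas (k+1) hmem).mono (𝓕.le (k+1)) le_rfl).aestronglyMeasurable
    have hI_int : Integrable (I (k+1)) μ := by
      refine integrable_of_abs_bound hI_meas 1 fun ω => ?_
      rw [abs_le]
      exact ⟨by linarith [(hI01 (k+1) hmem ω).1], (hI01 (k+1) hmem ω).2⟩
    have hgI_int : Integrable (g * I (k+1)) μ := by
      refine integrable_of_abs_bound (hg_meas.mul hI_meas) (exp (t * k)) fun ω => ?_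
      rw [Pi.mul_apply, abs_mul]
      calc |g ω| * |I (k+1) ω| ≤ exp (t * k) * 1 := by
            refine mul_le_mul (hg_bound ω) ?_ (abs_nonneg _) (exp_pos _).le
            rw [abs_le]
            exact ⟨by linarith [(hI01 (k+1) hmem ω).1], (hI01 (k+1) hmem ω).2⟩
        _ = exp (t * k) := mul_one _
    -- pull-out
    have hpull : μ[g * I (k+1) | 𝓕 k] =ᵐ[μ] g * μ[I (k+1) | 𝓕 k] :=
      condExp_stronglyMeasurable_mul_of_bound hm hg_sm hI_int (exp (t * k))
        (Filter.Eventually.of_forall hg_bound)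
    have hcond' : ∀ᵐ ω ∂μ, (μ[I (k+1) | 𝓕 k]) ω ≤ p := by
      have := hcond (k+1) hmem
      simpa using this
    have hkey : ∫ ω, g ω * I (k+1) ω ∂μ ≤ p * ∫ ω, g ω ∂μ := by
      have h1 : ∫ ω, g ω * I (k+1) ω ∂μ = ∫ ω, (μ[g * I (k+1) | 𝓕 k]) ω ∂μ :=
        (integral_condExp hm).symm
      have h2 : ∫ ω, (μ[g * I (k+1) | 𝓕 k]) ω ∂μ = ∫ ω, g ω * (μ[I (k+1) | 𝓕 k]) ω ∂μ :=
        integral_congr_ae hpull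
      have h3 : ∫ ω, g ω * (μ[I (k+1) | 𝓕 k]) ω ∂μ ≤ ∫ ω, g ω * p ∂μ := by
        refine integral_mono_ae (Integrable.congr integrable_condExp hpull) (hg_int.mul_const p) ?_
        filter_upwards [hcond'] with ω hω
        exact mul_le_mul_of_nonneg_left hω (hg_nonneg ω)
      rw [h1, h2]
      calc ∫ ω, g ω * (μ[I (k+1) | 𝓕 k]) ω ∂μ ≤ ∫ ω, g ω * p ∂μ := h3
        _ = p * ∫ ω, g ω ∂μ := by rw [integral_mul_const]; ring
    -- split the sum
    have hsplit : ∀ ω, exp (t * ∑ i ∈ Finset.Icc 1 (k+1), I i ω)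
        = g ω + (exp t - 1) * (g ω * I (k+1) ω) := by
      intro ω
      rw [Finset.sum_Icc_succ_top (by omega : 1 ≤ k + 1), mul_add, exp_add]
      rcases hbin (k+1) hmem ω with h | h <;> rw [h] <;> simp [hg_def] <;> ring
    have hint_eq : ∫ ω, exp (t * ∑ i ∈ Finset.Icc 1 (k+1), I i ω) ∂μ
        = (∫ ω, g ω ∂μ) + (exp t - 1) * ∫ ω, g ω * I (k+1) ω ∂μ := by
      have hgI_int' : Integrable (fun ω => g ω * I (k+1) ω) μ := hgI_int
      simp_rw [hsplit]
      rw [integral_add hg_int (hgI_int'.const_mul (exp t - 1)), integral_const_mul]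
    have hIg_nonneg : 0 ≤ ∫ ω, g ω ∂μ := integral_nonneg hg_nonneg
    have het : (0:ℝ) ≤ exp t - 1 := by
      have := Real.one_le_exp ht; linarith
    have hbase : (1:ℝ) ≤ 1 + p * (exp t - 1) := by nlinarith
    have ihk := ih hk
    rw [hint_eq]
    calc (∫ ω, g ω ∂μ) + (exp t - 1) * ∫ ω, g ω * I (k+1) ω ∂μ
        ≤ (∫ ω, g ω ∂μ) + (exp t - 1) * (p * ∫ ω, g ω ∂μ) := by nlinarith
      _ = (1 + p * (exp t - 1)) * ∫ ω, g ω ∂μ := by ring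
      _ ≤ (1 + p * (exp t - 1)) * (1 + p * (exp t - 1)) ^ k := by nlinarith
      _ = (1 + p * (exp t - 1)) ^ (k+1) := by ring
end helpers

/-- **Soundness given per-round cheating bounds.**  With acceptance threshold
`τ = ⌈n·(p_max + ε′)⌉` for a per-round cheating bound `p_max ∈ (0,1)` and slack `ε′ > 0`
with `p_max + ε′ < 1`, one has `n·p_max < τ ≤ n` and
`μ(S ≥ τ) ≤ exp(−n · D(τ/n ‖ p_max))`, where `S` is the number of accepted rounds of an
adversary whose conditional per-round success probability is at most `p_max`. -/
theorem soundness_given_per_round_bounds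
    {Ω : Type*} {m0 : MeasurableSpace Ω} {μ : Measure Ω} [IsProbabilityMeasure μ]
    (n : ℕ) (hn : 1 ≤ n)
    (pmax ε' : ℝ) (hpmax : pmax ∈ Set.Ioo (0 : ℝ) 1) (hε' : 0 < ε')
    (hsum : pmax + ε' < 1)
    (𝓕 : Filtration ℕ m0) (I : ℕ → Ω → ℝ)
    (hbin : ∀ i ∈ Finset.Icc 1 n, ∀ ω, I i ω = 0 ∨ I i ω = 1)
    (hmeas : ∀ i ∈ Finset.Icc 1 n, Measurable[𝓕 i] (I i))
    (hcond : ∀ i ∈ Finset.Icc 1 n, ∀ᵐ ω ∂μ, (μ[I i | 𝓕 (i - 1)]) ω ≤ pmax) :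
    (n : ℝ) * pmax < (⌈(n : ℝ) * (pmax + ε')⌉₊ : ℝ) ∧
      ⌈(n : ℝ) * (pmax + ε')⌉₊ ≤ n ∧
      μ {ω | ((⌈(n : ℝ) * (pmax + ε')⌉₊ : ℕ) : ℝ) ≤ ∑ i ∈ Finset.Icc 1 n, I i ω}
        ≤ ENNReal.ofReal
            (Real.exp (-(n : ℝ) * klBin ((⌈(n : ℝ) * (pmax + ε')⌉₊ : ℝ) / n) pmax)) := by
  obtain ⟨hp0, hp1⟩ := hpmax
  have hn0 : (0:ℝ) < n := by exact_mod_cast hn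
  set τ : ℕ := ⌈(n : ℝ) * (pmax + ε')⌉₊ with hτ_def
  have hτ1 : (n : ℝ) * pmax < (τ : ℝ) := by
    have h1 : (n:ℝ) * pmax < (n:ℝ) * (pmax + ε') := by nlinarith
    have h2 : (n:ℝ) * (pmax + ε') ≤ (τ : ℝ) := Nat.le_ceil _
    linarith
  have hτn : τ ≤ n := by
    rw [hτ_def]
    refine Nat.ceil_le.mpr ?_
    nlinarith
  refine ⟨hτ1, hτn, ?_⟩
  -- tail bound
  set X : Ω → ℝ := fun ω => ∑ i ∈ Finset.Icc 1 n, I i ω with hX_def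
  have hI01 : ∀ i ∈ Finset.Icc 1 n, ∀ ω, 0 ≤ I i ω ∧ I i ω ≤ 1 := by
    intro i hi ω; rcases hbin i hi ω with h | h <;> rw [h] <;> norm_num
  have hX_meas : Measurable X := by
    apply Finset.measurable_sum
    intro i hi
    exact (hmeas i hi).mono (𝓕.le i) le_rfl
  have hX_bound : ∀ ω, 0 ≤ X ω ∧ X ω ≤ n := by
    intro ω
    constructor
    · exact Finset.sum_nonneg fun i hi => (hI01 i hi ω).1
    · calc X ω ≤ ∑ i ∈ Finset.Icc 1 n, (1 : ℝ) :=
            Finset.sum_le_sum fun i hi => (hI01 i hi ω).2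
        _ = n := by simp
  -- Chernoff bound for every t ≥ 0
  have hB : ∀ t : ℝ, 0 ≤ t →
      (μ {ω | (τ : ℝ) ≤ X ω}).toReal ≤ exp (-t * τ) * (1 + pmax * (exp t - 1)) ^ n := by
    intro t ht
    have hint : Integrable (fun ω => exp (t * X ω)) μ := by
      refine integrable_of_abs_bound ((measurable_const.mul hX_meas).exp).aestronglyMeasurable
        (exp (t * n)) fun ω => ?_
      rw [abs_of_nonneg (exp_pos _).le]
      exact exp_le_exp.mpr (mul_le_mul_of_nonneg_left (hX_bound ω).2 ht)
    have hmarkov := ProbabilityTheory.measure_ge_le_exp_mul_mgf (μ := μ) (X := X) (τ : ℝ) ht hint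
    refine hmarkov.trans ?_
    have hmgf : ProbabilityTheory.mgf X μ t ≤ (1 + pmax * (exp t - 1)) ^ n :=
      mgf_sum_le 𝓕 I pmax hp0.le n hbin hmeas hcond t ht n le_rfl
    have : (0:ℝ) ≤ exp (-t * τ) := (exp_pos _).le
    nlinarith [this, hmgf]
  -- from toReal bound to the goal
  have hfin : μ {ω | (τ : ℝ) ≤ X ω} ≠ ⊤ := measure_ne_top μ _
  rw [← ENNReal.ofReal_toReal hfin]
  refine ENNReal.ofReal_le_ofReal ?_
  set a : ℝ := (τ : ℝ) / n with ha_def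
  have hτpos : (0:ℝ) < τ := lt_of_le_of_lt (by positivity) hτ1
  have ha_pos : 0 < a := by positivity
  have hap : pmax < a := by
    rw [ha_def, lt_div_iff₀ hn0]; linarith [hτ1]
  have ha1 : a ≤ 1 := by
    rw [ha_def, div_le_one hn0]; exact_mod_cast hτn
  have hna : (n : ℝ) * a = τ := by rw [ha_def]; field_simp
  by_cases hcase : τ = n
  · -- a = 1 : limit argument
    have ha_eq : a = 1 := by rw [ha_def, hcase]; field_simp
    have hT : exp (-(n : ℝ) * klBin a pmax) = pmax ^ n := by
      rw [ha_eq]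
      simp only [klBin, sub_self, zero_mul, add_zero, one_mul]
      rw [one_div, log_inv]
      rw [show -(n:ℝ) * -log pmax = (n:ℝ) * log pmax by ring, exp_nat_mul, exp_log hp0]
    rw [hT]
    have hτr : (τ : ℝ) = n := by exact_mod_cast hcase
    -- bound rewritten
    have hB' : ∀ t : ℝ, 0 ≤ t →
        (μ {ω | (τ : ℝ) ≤ X ω}).toReal ≤ ((1 - pmax) * exp (-t) + pmax) ^ n := by
      intro t ht
      refine (hB t ht).trans_eq ?_
      rw [hτr, show -t * (n:ℝ) = (n:ℝ) * (-t) by ring, exp_nat_mul, ← mul_pow]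
      congr 1
      rw [exp_neg]
      field_simp
      ring
    have htend : Tendsto (fun t : ℝ => ((1 - pmax) * exp (-t) + pmax) ^ n) atTop
        (nhds (pmax ^ n)) := by
      have h0 : Tendsto (fun t : ℝ => (1 - pmax) * exp (-t) + pmax) atTop
          (nhds ((1 - pmax) * 0 + pmax)) :=
        ((Real.tendsto_exp_neg_atTop_nhds_zero).const_mul _).add_const _
      rw [mul_zero, zero_add] at h0
      exact h0.pow n
    exact ge_of_tendsto htend (eventually_atTop.mpr ⟨0, fun t ht => hB' t ht⟩)
  · -- a < 1 : optimal t
    have ha1' : a < 1 := lt_of_le_of_ne ha1 (by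
      intro h
      apply hcase
      have : (τ : ℝ) = n := by
        rw [ha_def] at h; field_simp at h; exact_mod_cast h
      exact_mod_cast this)
    have h1a : 0 < 1 - a := by linarith
    have h1p : 0 < 1 - pmax := by linarith
    set r : ℝ := a * (1 - pmax) / ((1 - a) * pmax) with hr_def
    have hr_pos : 0 < r := by positivity
    have hr1 : 1 ≤ r := by
      rw [hr_def, le_div_iff₀ (by positivity)]
      nlinarith
    set t : ℝ := log r with ht_def
    have ht : 0 ≤ t := log_nonneg hr1
    have hexp_t : exp t = r := exp_log hr_pos
    have hfactor : 1 + pmax * (exp t - 1) = (1 - pmax) / (1 - a) := by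
      rw [hexp_t, hr_def]
      field_simp
      ring
    have hexp_neg : exp (-t) = (1 - a) * pmax / (a * (1 - pmax)) := by
      rw [exp_neg, hexp_t, hr_def]
      rw [inv_div]
    have hBτ := hB t ht
    rw [hfactor] at hBτ
    have hexp_tτ : exp (-t * τ) = ((1 - a) * pmax / (a * (1 - pmax))) ^ τ := by
      rw [show -t * (τ:ℝ) = (τ:ℝ) * (-t) by ring, exp_nat_mul, hexp_neg]
    rw [hexp_tτ] at hBτ
    refine hBτ.trans_eq ?_
    -- algebra: ((1-a)p/(a(1-p)))^τ * ((1-p)/(1-a))^n = exp(-n * klBin a p)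
    have hkl : exp (-(n : ℝ) * klBin a pmax)
        = (pmax / a) ^ τ * ((1 - pmax) / (1 - a)) ^ (n - τ) := by
      have hsplitexp : -(n : ℝ) * klBin a pmax
          = (τ : ℝ) * log (pmax / a) + ((n - τ : ℕ) : ℝ) * log ((1 - pmax) / (1 - a)) := by
        rw [klBin]
        have h1 : log (pmax / a) = - log (a / pmax) := by
          rw [← log_inv, inv_div]
        have h2 : log ((1 - pmax) / (1 - a)) = - log ((1 - a) / (1 - pmax)) := by
          rw [← log_inv, inv_div]
        have h3 : ((n - τ : ℕ) : ℝ) = (n : ℝ) - τ := by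
          rw [Nat.cast_sub hτn]
        rw [h1, h2, h3, ← hna]
        ring
      rw [hsplitexp, exp_add, exp_nat_mul, exp_nat_mul,
        exp_log (by positivity), exp_log (by positivity)]
    rw [hkl]
    -- final power algebra
    have hC : ((1 - pmax) / (1 - a)) ≠ 0 := by positivity
    have hA : (1 - a) * pmax / (a * (1 - pmax)) = (pmax / a) / ((1 - pmax) / (1 - a)) := by
      field_simp
    rw [hA, div_pow, show n = τ + (n - τ) by omega, pow_add, Nat.add_sub_cancel_left]
    field_simp
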